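/- Let p ∈ A be a projection and x, y ∈ S_p(X). Then x·⟨x,z⟩ = y·⟨y,z⟩ for all z ∈ X (i.e. the rank-one projections θ_{x,x} and θ_{y,y} coincide) if and only if there exists u ∈ A with u*u = uu* = p and y = x·u. -/
import Mathlib


/-- A right Hilbert C*-module structure on `X` over the C*-algebra `A`:
`X` is a right `A`-module with an `A`-valued inner product satisfying
`⟨x,y⟩* = ⟨y,x⟩`, `⟨x, y·a⟩ = ⟨x,y⟩·a`, `⟨x,x⟩ ≥ 0`, and the norm of `X`
satisfies `‖x‖² = ‖⟨x,x⟩‖` (so completeness of `X` is completeness for this norm). -/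
structure CStarModuleStr (A X : Type*) [NormedRing A] [StarRing A] [CStarRing A]
    [PartialOrder A] [StarOrderedRing A] [NormedAddCommGroup X] where
  smul : X → A → X
  inner : X → X → A
  add_smul : ∀ x y a, smul (x + y) a = smul x a + smul y a
  smul_add : ∀ x a b, smul x (a + b) = smul x a + smul x b
  smul_mul : ∀ x a b, smul (smul x a) b = smul x (a * b)
  inner_add_left : ∀ x y z, inner (x + y) z = inner x z + inner y z
  inner_add_right : ∀ x y z, inner x (y + z) = inner x y + inner x z
  star_inner : ∀ x y, star (inner x y) = inner y x
  inner_smul_right : ∀ x y a, inner x (smul y a) = inner x y * a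
  inner_self_nonneg : ∀ x, 0 ≤ inner x x
  norm_sq_eq : ∀ x, ‖x‖ ^ 2 = ‖inner x x‖

variable {A X : Type*} [NormedRing A] [StarRing A] [CStarRing A]
  [PartialOrder A] [StarOrderedRing A] [CompleteSpace A]
  [NormedAddCommGroup X] [CompleteSpace X]

private theorem csm_inner_sub_left (M : CStarModuleStr A X) (w w' z : X) :
    M.inner (w - w') z = M.inner w z - M.inner w' z := by
  have h : M.inner (w - w') z + M.inner w' z = M.inner w z := by
    rw [← M.inner_add_left, sub_add_cancel]
  exact eq_sub_of_add_eq h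

private theorem csm_inner_sub_right (M : CStarModuleStr A X) (w w' z : X) :
    M.inner z (w - w') = M.inner z w - M.inner z w' := by
  have h : M.inner z (w - w') + M.inner z w' = M.inner z w := by
    rw [← M.inner_add_right, sub_add_cancel]
  exact eq_sub_of_add_eq h

private theorem inner_smul_left' (M : CStarModuleStr A X) (x y : X) (a : A) :
    M.inner (M.smul x a) y = star a * M.inner x y := by
  rw [← M.star_inner, M.inner_smul_right, star_mul, M.star_inner]

private theorem eq_of_inner_self (M : CStarModuleStr A X) (w w' : X)
    (h : M.inner (w - w') (w - w') = 0) : w = w' := by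
  have hn := M.norm_sq_eq (w - w')
  rw [h, norm_zero] at hn
  have : ‖w - w'‖ = 0 := by nlinarith [norm_nonneg (w - w')]
  rw [norm_eq_zero, sub_eq_zero] at this
  exact this

/-- For `x, y ∈ S_p(X)`, the rank-one projections `θ_{x,x}` and `θ_{y,y}` coincide
(`x·⟨x,z⟩ = y·⟨y,z⟩` for all `z`) if and only if `y = x·u` for some unitary `u` of
the corner algebra `pAp` (i.e. `u*u = uu* = p`). -/
theorem theta_eq_iff_exists_unitary (M : CStarModuleStr A X) (p : A)
    (hp : p * p = p) (hps : star p = p) (x y : X)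
    (hx : M.inner x x = p) (hy : M.inner y y = p) :
    (∀ z : X, M.smul x (M.inner x z) = M.smul y (M.inner y z)) ↔
      ∃ u : A, star u * u = p ∧ u * star u = p ∧ y = M.smul x u := by
  -- helper: if ⟨w,w⟩ = p then w·p = w
  have smul_p : ∀ w : X, M.inner w w = p → M.smul w p = w := by
    intro w hw
    apply eq_of_inner_self M
    rw [csm_inner_sub_left M, csm_inner_sub_right M, csm_inner_sub_right M]
    simp only [M.inner_smul_right, inner_smul_left' M]
    rw [hw, hps]
    simp [mul_assoc, hp]
  constructor
  · intro h
    refine ⟨M.inner x y, ?_, ?_, ?_⟩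
    · rw [M.star_inner, ← M.inner_smul_right, h y, M.inner_smul_right, hy, hp]
    · rw [M.star_inner, ← M.inner_smul_right]
      have hxs : M.smul y (M.inner y x) = x := by
        rw [← h x, hx, smul_p x hx]
      rw [hxs, hx]
    · rw [h y, hy, smul_p y hy]
  · rintro ⟨u, hu1, hu2, rfl⟩ z
    rw [M.smul_mul, inner_smul_left' M, ← mul_assoc, hu2]
    have key : ∀ b c : A, M.inner (M.smul x b) (M.smul x c) = star b * (p * c) := by
      intro b c
      rw [inner_smul_left' M, M.inner_smul_right, hx]
    apply eq_of_inner_self M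
    set a := M.inner x z
    have hpa : p * (p * a) = p * a := by rw [← mul_assoc, hp]
    rw [csm_inner_sub_left M, csm_inner_sub_right M, csm_inner_sub_right M,
      key, key, key, key]
    simp [star_mul, hps, mul_assoc, hpa]
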